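/- Let n, M, i be integers with n ≥ 2, M ≥ n, and 2n−1 ≤ i ≤ M+n−1. Let u₀, …, uₙ be the standard basis of ℝ^{n+1}. For 0 ≤ s ≤ n−1 let D_s = cone{u₀, …, u_s}, and for n ≤ s ≤ 2n−1 let D_s = cone{u_{j+1} + u_j : s−n ≤ j ≤ n−1}. For 0 ≤ s ≤ 2n−1 let T_s : ℝ^{n+1} → ℝ^{n+1} be the diagonal linear map multiplying the j-th coordinate by the binomial coefficient C(i−j, i−s) (equal to 0 when i−s > i−j). Then the convex cone generated by the union of the sets T_s(D_s) over all integers s with max(0, i−M) ≤ s ≤ 2n−1 equals cone{u₀, …, u_{n−1}, n·uₙ + (i−n+1)·u_{n−1}}. -/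

import Mathlib

open Finset

/-- `nonnegSpan S` is the set of (finite) nonnegative real linear combinations of
elements of `S`, i.e. the convex cone generated by `S` (together with `0`). -/
def nonnegSpan {V : Type*} [AddCommMonoid V] [Module ℝ V] (S : Set V) : Set V :=
  { x | ∃ (k : ℕ) (c : Fin k → ℝ) (v : Fin k → V),
      (∀ t, 0 ≤ c t) ∧ (∀ t, v t ∈ S) ∧ x = ∑ t, c t • v t }

/-- The standard basis vector `u_j` of `ℝ^{n+1}`. -/
def stdb (n : ℕ) (j : Fin (n + 1)) : Fin (n + 1) → ℝ := Pi.single j 1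

namespace NNS
variable {V : Type*} [AddCommMonoid V] [Module ℝ V]

lemma mem (S : Set V) {x : V} (h : x ∈ S) : x ∈ nonnegSpan S :=
  ⟨1, fun _ => 1, fun _ => x, fun _ => zero_le_one, fun _ => h, by simp⟩

lemma zero_mem (S : Set V) : (0 : V) ∈ nonnegSpan S :=
  ⟨0, Fin.elim0, Fin.elim0, fun t => t.elim0, fun t => t.elim0, by simp⟩

lemma smul_mem (S : Set V) {c : ℝ} {x : V} (hc : 0 ≤ c) (hx : x ∈ nonnegSpan S) :
    c • x ∈ nonnegSpan S := by
  obtain ⟨k, d, v, hd, hv, rfl⟩ := hx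
  refine ⟨k, fun t => c * d t, v, fun t => mul_nonneg hc (hd t), hv, ?_⟩
  rw [Finset.smul_sum]
  exact Finset.sum_congr rfl fun t _ => by simp [smul_smul]


lemma add_mem (S : Set V) {x y : V} (hx : x ∈ nonnegSpan S) (hy : y ∈ nonnegSpan S) :
    x + y ∈ nonnegSpan S := by
  obtain ⟨k, c, v, hc, hv, rfl⟩ := hx
  obtain ⟨l, d, w, hd, hw, rfl⟩ := hy
  refine ⟨k + l, Fin.append c d, Fin.append v w, ?_, ?_, ?_⟩
  · intro t
    refine Fin.addCases (fun t => ?_) (fun t => ?_) t <;>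
      simp [Fin.append_left, Fin.append_right, hc, hd]
  · intro t
    refine Fin.addCases (fun t => ?_) (fun t => ?_) t <;>
      simp [Fin.append_left, Fin.append_right, hv, hw]
  · rw [Fin.sum_univ_add]
    simp [Fin.append_left, Fin.append_right]

lemma sum_mem (S : Set V) : ∀ (k : ℕ) (f : Fin k → V), (∀ t, f t ∈ nonnegSpan S) →
    (∑ t, f t) ∈ nonnegSpan S
  | 0, f, _ => by simpa using zero_mem S
  | (k+1), f, h => by
    rw [Fin.sum_univ_succ]
    exact add_mem S (h 0) (sum_mem S k _ (fun t => h t.succ))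

lemma span_le {S R : Set V} (h : S ⊆ nonnegSpan R) : nonnegSpan S ⊆ nonnegSpan R := by
  rintro x ⟨k, c, v, hc, hv, rfl⟩
  exact sum_mem R k _ fun t => smul_mem R (hc t) (h (hv t))

lemma image_diag_span_le {n : ℕ} {a : Fin n → ℝ} {G R : Set (Fin n → ℝ)}
    (h : ∀ v ∈ G, (fun j => a j * v j) ∈ nonnegSpan R) :
    (fun y : Fin n → ℝ => fun j => a j * y j) '' nonnegSpan G ⊆ nonnegSpan R := by
  rintro x ⟨y, ⟨k, c, v, hc, hv, rfl⟩, rfl⟩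
  have he : (fun j => a j * (∑ t, c t • v t) j) = ∑ t, c t • (fun j => a j * v t j) := by
    funext j
    simp only [Finset.sum_apply, Pi.smul_apply, smul_eq_mul, Finset.mul_sum]
    exact Finset.sum_congr rfl fun t _ => by ring
  show (fun j => a j * (∑ t, c t • v t) j) ∈ nonnegSpan R
  rw [he]
  exact sum_mem R k _ fun t => smul_mem R (hc t) (h _ (hv t))

end NNS


lemma keyChoose (m k : ℕ) : (m+1) * m.choose k = (m+1).choose k * (m+1-k) :=
  calc (m+1) * m.choose k = (m+1).choose (k+1) * (k+1) := Nat.add_one_mul_choose_eq m k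
    _ = (m+1).choose k * (m+1-k) := Nat.choose_succ_right_eq (m+1) k

lemma decompLemma (n : ℕ) (hn : 0 < n) {V : Type*} [AddCommGroup V] [Module ℝ V]
    (u v : V) (a b c : ℝ) :
    a • u + b • v = (a/(n:ℝ)) • ((n:ℝ) • u + c • v) + (b - a * c / (n:ℝ)) • v := by
  have hnR : ((n:ℝ)) ≠ 0 := by exact_mod_cast hn.ne'
  rw [smul_add, smul_smul, smul_smul, add_assoc, ← add_smul]
  have e1 : a/(n:ℝ) * (n:ℝ) = a := by field_simp
  have e2 : a/(n:ℝ) * c + (b - a * c / (n:ℝ)) = b := by field_simp; ring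
  rw [e1, e2]


/-- Let `n, M, i` be integers with `n ≥ 2`, `M ≥ n` and `2n−1 ≤ i ≤ M+n−1`.  With
`u₀, …, uₙ` the standard basis of `ℝ^{n+1}`, set `D_s = cone{u₀,…,u_s}` for
`0 ≤ s ≤ n−1` and `D_s = cone{u_{j+1} + u_j : s−n ≤ j ≤ n−1}` for `n ≤ s ≤ 2n−1`,
and let `T_s` be the diagonal map multiplying the `j`-th coordinate by `C(i−j, i−s)`.
Then the convex cone generated by the union of the `T_s(D_s)` over
`max(0, i−M) ≤ s ≤ 2n−1` equals `cone{u₀, …, u_{n−1}, n·uₙ + (i−n+1)·u_{n−1}}`. -/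
theorem stmt_13 (n M i : ℕ) (hn : 2 ≤ n) (hM : n ≤ M)
    (hi1 : 2 * n - 1 ≤ i) (hi2 : i ≤ M + n - 1) :
    nonnegSpan (⋃ s ∈ Set.Icc (max 0 (i - M)) (2 * n - 1),
      (fun y : Fin (n + 1) → ℝ => fun j : Fin (n + 1) =>
          ((i - (j : ℕ)).choose (i - s) : ℝ) * y j) ''
        (if s < n then
          nonnegSpan { x | ∃ j : Fin (n + 1), (j : ℕ) ≤ s ∧ x = stdb n j }
        else
          nonnegSpan { x | ∃ j : ℕ, ∃ _ : s - n ≤ j, ∃ _ : j ≤ n - 1,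
            x = stdb n ⟨j + 1, by omega⟩ + stdb n ⟨j, by omega⟩ }))
      = nonnegSpan
          ({ x | ∃ j : Fin (n + 1), (j : ℕ) ≤ n - 1 ∧ x = stdb n j } ∪
            {(n : ℝ) • stdb n ⟨n, by omega⟩
              + ((i : ℝ) - n + 1) • stdb n ⟨n - 1, by omega⟩}) := by
  have hnR : (0:ℝ) < (n:ℝ) := by exact_mod_cast (by omega : 0 < n)
  apply Set.Subset.antisymm
  · -- LHS ⊆ RHS
    apply NNS.span_le
    intro x hx
    simp only [Set.mem_iUnion, exists_prop] at hx
    obtain ⟨s, hs, hx⟩ := hx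
    rw [Set.mem_Icc] at hs
    obtain ⟨hs1, hs2⟩ := hs
    by_cases hsn : s < n
    · rw [if_pos hsn] at hx
      refine NNS.image_diag_span_le ?_ hx
      rintro w ⟨j, hj, rfl⟩
      have he : (fun j' : Fin (n+1) => ((i - (j':ℕ)).choose (i - s) : ℝ) * stdb n j j')
          = ((i - (j:ℕ)).choose (i - s) : ℝ) • stdb n j := by
        funext j'
        by_cases h : j' = j <;> simp [stdb, Pi.single_apply, h]
      rw [he]
      exact NNS.smul_mem _ (Nat.cast_nonneg _)
        (NNS.mem _ (Or.inl ⟨j, by omega, rfl⟩))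
    · rw [if_neg hsn] at hx
      refine NNS.image_diag_span_le ?_ hx
      rintro w ⟨j, hj1, hj2, rfl⟩
      have he : (fun j' : Fin (n+1) => ((i - (j':ℕ)).choose (i - s) : ℝ) *
            (stdb n ⟨j + 1, by omega⟩ + stdb n ⟨j, by omega⟩) j')
          = ((i - (j+1)).choose (i - s) : ℝ) • stdb n ⟨j + 1, by omega⟩
            + ((i - j).choose (i - s) : ℝ) • stdb n ⟨j, by omega⟩ := by
        funext j'
        simp only [stdb, Pi.add_apply, Pi.smul_apply, smul_eq_mul, Pi.single_apply,
          Fin.ext_iff, Fin.val_mk]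
        split_ifs with h1 h2 h2 <;>
          first
          | (exfalso; omega)
          | (rw [h1]; ring)
          | (rw [h2]; ring)
          | ring
      rw [he]
      by_cases hj3 : j + 1 ≤ n - 1
      · exact NNS.add_mem _
          (NNS.smul_mem _ (Nat.cast_nonneg _) (NNS.mem _ (Or.inl ⟨⟨j+1, by omega⟩, hj3, rfl⟩)))
          (NNS.smul_mem _ (Nat.cast_nonneg _) (NNS.mem _ (Or.inl ⟨⟨j, by omega⟩, hj2, rfl⟩)))
      · have hj4 : j = n - 1 := by omega
        subst hj4
        have efin : (⟨n - 1 + 1, by omega⟩ : Fin (n+1)) = ⟨n, by omega⟩ :=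
          Fin.ext (by simp; omega)
        have ea : i - (n - 1 + 1) = i - n := by omega
        have eb : i - (n - 1) = i - n + 1 := by omega
        rw [efin, ea, eb]
        set a : ℕ := (i - n).choose (i - s) with ha
        set b : ℕ := (i - n + 1).choose (i - s) with hb
        have hkey : (i - n + 1) * a = b * (s - n + 1) := by
          have h1 := keyChoose (i - n) (i - s)
          have e3 : i - n + 1 - (i - s) = s - n + 1 := by omega
          rw [e3] at h1
          exact h1
        have hineq : (i - n + 1) * a ≤ n * b := by
          rw [hkey]
          calc b * (s - n + 1) ≤ b * n := Nat.mul_le_mul_left b (by omega)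
            _ = n * b := Nat.mul_comm b n
        have hcast : ((i:ℝ) - n + 1) = ((i - n + 1 : ℕ) : ℝ) := by
          have : n ≤ i := by omega
          push_cast [this]; ring
        have hr : (0:ℝ) ≤ (b:ℝ) - (a:ℝ) * ((i:ℝ) - (n:ℝ) + 1) / n := by
          rw [sub_nonneg, div_le_iff₀ hnR, hcast]
          have h2 := (Nat.cast_le (α := ℝ)).mpr hineq
          push_cast at h2 ⊢
          nlinarith [h2]
        rw [decompLemma n (by omega) _ _ (a:ℝ) (b:ℝ) ((i:ℝ) - (n:ℝ) + 1)]
        exact NNS.add_mem _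
          (NNS.smul_mem _ (div_nonneg (Nat.cast_nonneg _) hnR.le) (NNS.mem _ (Or.inr rfl)))
          (NNS.smul_mem _ hr (NNS.mem _ (Or.inl ⟨⟨n - 1, by omega⟩, by simp, rfl⟩)))
  · -- RHS ⊆ LHS
    apply NNS.span_le
    rintro x (⟨j, hj, rfl⟩ | rfl)
    · apply NNS.mem
      refine Set.mem_iUnion₂.mpr ⟨n - 1, ?_, ?_⟩
      · rw [Set.mem_Icc]; constructor
        · exact max_le (Nat.zero_le _) (by omega)
        · omega
      · rw [if_pos (by omega : n - 1 < n)]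
        have hCpos' : 0 < (i - (j:ℕ)).choose (i - (n - 1)) :=
          Nat.choose_pos (by omega)
        refine ⟨(((i - (j:ℕ)).choose (i - (n - 1)) : ℝ))⁻¹ • stdb n j, ?_, ?_⟩
        · exact NNS.smul_mem _ (inv_nonneg.mpr (Nat.cast_nonneg _)) (NNS.mem _ ⟨j, hj, rfl⟩)
        · funext j'
          by_cases h : j' = j
          · subst h
            simp only [Pi.smul_apply, smul_eq_mul, stdb, Pi.single_eq_same]
            rw [mul_one, mul_inv_cancel₀]
            exact_mod_cast hCpos'.ne'
          · simp [stdb, Pi.single_apply, h]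
    · apply NNS.mem
      refine Set.mem_iUnion₂.mpr ⟨2 * n - 1, ?_, ?_⟩
      · rw [Set.mem_Icc]; constructor
        · exact max_le (Nat.zero_le _) (by omega)
        · omega
      · rw [if_neg (by omega : ¬ 2 * n - 1 < n)]
        set k : ℕ := i - (2 * n - 1) with hk
        have ea : i - (n - 1 + 1) = i - n := by omega
        have eb : i - (n - 1) = i - n + 1 := by omega
        set a : ℕ := (i - n).choose k with ha
        set b : ℕ := (i - n + 1).choose k with hb
        have hapos : 0 < a := Nat.choose_pos (by omega)
        have haR : (0:ℝ) < (a:ℝ) := by exact_mod_cast hapos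
        have hkey : (i - n + 1) * a = b * n := by
          have h1 := keyChoose (i - n) k
          have e3 : i - n + 1 - k = n := by omega
          rw [e3] at h1
          exact h1
        have hcast : ((i:ℝ) - n + 1) = ((i - n + 1 : ℕ) : ℝ) := by
          have : n ≤ i := by omega
          push_cast [this]; ring
        refine ⟨((n:ℝ)/(a:ℝ)) • (stdb n ⟨n - 1 + 1, by omega⟩ + stdb n ⟨n - 1, by omega⟩),
          ?_, ?_⟩
        · exact NNS.smul_mem _ (div_nonneg hnR.le haR.le)
            (NNS.mem _ ⟨n - 1, by omega, by omega, rfl⟩)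
        · funext j'
          simp only [Pi.smul_apply, Pi.add_apply, smul_eq_mul, stdb, Pi.single_apply,
            Fin.ext_iff, Fin.val_mk]
          have hkeyR : ((i:ℝ) - n + 1) * a = (b:ℝ) * n := by
            rw [hcast]
            exact_mod_cast hkey
          split_ifs with h1 h2 h3 <;>
            first
            | (exfalso; omega)
            | ((rw [show i - (j':ℕ) = i - n by omega, ← ha]; field_simp) <;> ring)
            | (rw [show i - (j':ℕ) = i - n + 1 by omega, ← hb]
               field_simp
               linarith [hkeyR])
            | ring
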